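/- Let LCP be the longest-common-prefix array of the sorted suffixes of a collection S, and for each position i > 1 let 'i is a start of a p-segment' mean that the (p-segment of i in X^p) begins at i. Then LCP[i] = p iff i is the start of a (p+1)-segment of X^{p+1} but not the start of a p-segment of X^p; moreover such p is unique. -/

import Mathlib

open scoped Classical

/-- Symbol type for suffixes: ranked sentinels (ordered by (suffix length, string index))
below all regular alphabet symbols. -/
abbrev SSym (A : Type*) := (ℕ ×ₗ ℕ) ⊕ₗ A

variable {A : Type*} [LinearOrder A] {m k : ℕ}

/-- `symAt s (q, l) t` is the `t`-th symbol (0-indexed) of the `l`-suffix of the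
string `s q` (a string of length `k`), padded beyond its end with its own ranked sentinel. -/
def symAt (s : Fin m → Fin k → A) (o : Fin m × Fin (k+1)) (t : ℕ) : SSym A :=
  if _h : t < (o.2 : ℕ) then
    toLex (Sum.inr (s o.1 ⟨k - (o.2 : ℕ) + t, by have := o.2.isLt; omega⟩))
  else
    toLex (Sum.inl (toLex ((o.2 : ℕ), (o.1 : ℕ))))

/-- The `p`-prefix of the suffix occurrence `o`. -/
def pprefix (s : Fin m → Fin k → A) (p : ℕ) (o : Fin m × Fin (k+1)) : List (SSym A) :=
  List.ofFn fun t : Fin p => symAt s o t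

/-- The full suffix string of occurrence `o` (its `l` symbols followed by its sentinel). -/
def suffStr (s : Fin m → Fin k → A) (o : Fin m × Fin (k+1)) : List (SSym A) :=
  List.ofFn fun t : Fin ((o.2 : ℕ) + 1) => symAt s o t

/-- The order `≺_p`: compare `p`-prefixes lexicographically, then suffix lengths,
then string indices. -/
def precP (s : Fin m → Fin k → A) (p : ℕ) (α β : Fin m × Fin (k+1)) : Prop :=
  List.Lex (· < ·) (pprefix s p α) (pprefix s p β) ∨
    (pprefix s p α = pprefix s p β ∧
      ((α.2 : ℕ) < (β.2 : ℕ) ∨ ((α.2 : ℕ) = (β.2 : ℕ) ∧ (α.1 : ℕ) < (β.1 : ℕ))))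

/-- Full lexicographic order on suffix occurrences, ties broken by length then string index. -/
def fullOrd (s : Fin m → Fin k → A) (α β : Fin m × Fin (k+1)) : Prop :=
  List.Lex (· < ·) (suffStr s α) (suffStr s β) ∨
    (suffStr s α = suffStr s β ∧
      ((α.2 : ℕ) < (β.2 : ℕ) ∨ ((α.2 : ℕ) = (β.2 : ℕ) ∧ (α.1 : ℕ) < (β.1 : ℕ))))

/-- `[b,e]` is the `p`-segment of position `i` in the sorted array `X`:
a position `j` carries the same `p`-prefix as position `i` iff `b ≤ j ≤ e`. -/
def isSeg (s : Fin m → Fin k → A) (p : ℕ) {n : ℕ}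
    (X : Fin n → Fin m × Fin (k+1)) (b e i : Fin n) : Prop :=
  b ≤ i ∧ i ≤ e ∧ ∀ j, (pprefix s p (X j) = pprefix s p (X i) ↔ b ≤ j ∧ j ≤ e)

/-- Position `i` is the start of its `p`-segment in the sorted array `X`. -/
def isStart (s : Fin m → Fin k → A) (p : ℕ) {n : ℕ}
    (X : Fin n → Fin m × Fin (k+1)) (i : Fin n) : Prop :=
  ∀ j, j < i → pprefix s p (X j) ≠ pprefix s p (X i)

/- ### Auxiliary lemmas -/

lemma lex_cons_iff' {B : Type*} [LinearOrder B] {a b : B} {l₁ l₂ : List B} :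
    List.Lex (· < ·) (a :: l₁) (b :: l₂) ↔ a < b ∨ (a = b ∧ List.Lex (· < ·) l₁ l₂) := by
  constructor
  · intro h
    cases h with
    | cons h => exact Or.inr ⟨rfl, h⟩
    | rel h => exact Or.inl h
  · rintro (h | ⟨rfl, h⟩)
    · exact List.Lex.rel h
    · exact List.Lex.cons h

lemma lex_ofFn_iff {B : Type*} [LinearOrder B] :
    ∀ (n n' : ℕ) (f g : ℕ → B),
    (List.Lex (· < ·) (List.ofFn fun t : Fin n => f t) (List.ofFn fun t : Fin n' => g t) ↔
      (∃ d, d < n ∧ d < n' ∧ (∀ t < d, f t = g t) ∧ f d < g d) ∨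
      (n < n' ∧ ∀ t < n, f t = g t)) := by
  intro n
  induction n with
  | zero =>
    intro n' f g
    cases n' with
    | zero => simp [List.ofFn_zero]
    | succ n₁ =>
      simp only [List.ofFn_zero, List.ofFn_succ]
      constructor
      · intro _
        exact Or.inr ⟨Nat.succ_pos _, fun t ht => absurd ht (Nat.not_lt_zero t)⟩
      · intro _
        exact List.Lex.nil
  | succ n₀ ih =>
    intro n' f g
    cases n' with
    | zero =>
      simp only [List.ofFn_zero, List.ofFn_succ]
      constructor
      · intro h
        exact absurd h List.not_lex_nil
      · rintro (⟨d, _, hd, _⟩ | ⟨hn, _⟩) <;> omega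
    | succ n₁ =>
      rw [List.ofFn_succ, List.ofFn_succ, lex_cons_iff']
      simp only [Fin.val_succ, Fin.val_zero]
      rw [ih n₁ (fun t => f (t+1)) (fun t => g (t+1))]
      constructor
      · rintro (h | ⟨he, (⟨d, h1, h2, h3, h4⟩ | ⟨h1, h2⟩)⟩)
        · exact Or.inl ⟨0, Nat.succ_pos _, Nat.succ_pos _,
            fun t ht => absurd ht (Nat.not_lt_zero t), h⟩
        · refine Or.inl ⟨d+1, by omega, by omega, ?_, h4⟩
          intro t ht
          cases t with
          | zero => exact he
          | succ t => exact h3 t (by omega)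
        · refine Or.inr ⟨by omega, ?_⟩
          intro t ht
          cases t with
          | zero => exact he
          | succ t => exact h2 t (by omega)
      · rintro (⟨d, h1, h2, h3, h4⟩ | ⟨h1, h2⟩)
        · cases d with
          | zero => exact Or.inl h4
          | succ d =>
            refine Or.inr ⟨h3 0 (Nat.succ_pos _), Or.inl ⟨d, by omega, by omega, ?_, h4⟩⟩
            intro t ht
            exact h3 (t+1) (by omega)
        · refine Or.inr ⟨h2 0 (Nat.succ_pos _), Or.inr ⟨by omega, ?_⟩⟩
          intro t ht
          exact h2 (t+1) (by omega)

lemma symAt_min_ne (s : Fin m → Fin k → A) {α β : Fin m × Fin (k+1)} (h : α ≠ β) :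
    symAt s α (min (α.2:ℕ) (β.2:ℕ)) ≠ symAt s β (min (α.2:ℕ) (β.2:ℕ)) := by
  rcases lt_trichotomy (α.2:ℕ) (β.2:ℕ) with hlt | heq | hgt
  · rw [symAt, symAt, dif_neg (by omega), dif_pos (by omega)]
    intro hc
    have := toLex.injective hc
    simp at this
  · rw [symAt, symAt, dif_neg (by omega), dif_neg (by omega)]
    intro hc
    have h2 := toLex.injective (Sum.inl.inj (toLex.injective hc))
    have h2' : ((α.2:ℕ), (α.1:ℕ)) = ((β.2:ℕ), (β.1:ℕ)) := h2
    apply h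
    have ha2 : α.2 = β.2 := Fin.ext heq
    have ha1 : α.1 = β.1 := Fin.ext (congrArg Prod.snd h2')
    exact Prod.ext ha1 ha2
  · rw [symAt, symAt, dif_pos (by omega), dif_neg (by omega)]
    intro hc
    have := toLex.injective hc
    simp at this

lemma pprefix_eq_iff (s : Fin m → Fin k → A) (p : ℕ) (α β : Fin m × Fin (k+1)) :
    pprefix s p α = pprefix s p β ↔ ∀ t < p, symAt s α t = symAt s β t := by
  unfold pprefix
  constructor
  · intro h t ht
    exact congrFun (List.ofFn_injective h) ⟨t, ht⟩
  · intro h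
    congr 1
    funext t
    exact h t t.isLt

lemma pprefix_lex (s : Fin m → Fin k → A) {p : ℕ} {α β : Fin m × Fin (k+1)} {d : ℕ}
    (hd : d < p) (hag : ∀ t < d, symAt s α t = symAt s β t)
    (hlt : symAt s α d < symAt s β d) :
    List.Lex (· < ·) (pprefix s p α) (pprefix s p β) := by
  unfold pprefix
  rw [lex_ofFn_iff]
  exact Or.inl ⟨d, hd, hd, hag, hlt⟩

lemma suffStr_eq (s : Fin m → Fin k → A) {α β : Fin m × Fin (k+1)}
    (h : suffStr s α = suffStr s β) : α = β := by
  by_contra hne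
  have hlen : (α.2:ℕ) = (β.2:ℕ) := by
    have := congrArg List.length h
    simpa [suffStr] using this
  apply symAt_min_ne s hne
  have hmin : min (α.2:ℕ) (β.2:ℕ) = (α.2:ℕ) := by omega
  rw [hmin]
  have h1 : (suffStr s α)[(α.2:ℕ)]'(by simp [suffStr]) = symAt s α (α.2:ℕ) := by
    exact List.getElem_ofFn _
  have h2 : (suffStr s β)[(α.2:ℕ)]'(by simp [suffStr]; omega) = symAt s β (α.2:ℕ) := by
    exact List.getElem_ofFn _
  rw [← h1, ← h2]
  simp only [h]

lemma fullOrd_iff (s : Fin m → Fin k → A) {α β : Fin m × Fin (k+1)} (h : α ≠ β) :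
    fullOrd s α β ↔
      ∃ d, (∀ t < d, symAt s α t = symAt s β t) ∧ symAt s α d < symAt s β d := by
  unfold fullOrd
  constructor
  · rintro (hlex | ⟨heq, _⟩)
    · unfold suffStr at hlex
      rw [lex_ofFn_iff] at hlex
      rcases hlex with ⟨d, _, _, hag, hlt⟩ | ⟨hlen, hag⟩
      · exact ⟨d, hag, hlt⟩
      · exfalso
        have hmin : min (α.2:ℕ) (β.2:ℕ) = (α.2:ℕ) := by omega
        exact symAt_min_ne s h (by rw [hmin]; exact hag _ (by omega))
    · exact absurd (suffStr_eq s heq) h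
  · rintro ⟨d, hag, hlt⟩
    left
    unfold suffStr
    rw [lex_ofFn_iff]
    have hdle : d ≤ min (α.2:ℕ) (β.2:ℕ) := by
      by_contra hc
      exact symAt_min_ne s h (hag _ (by omega))
    exact Or.inl ⟨d, by omega, by omega, hag, hlt⟩

lemma list_le_of {B : Type*} [LinearOrder B] {l l' : List B}
    (h : l = l' ∨ List.Lex (· < ·) l l') : l ≤ l' :=
  h.elim le_of_eq (fun hl => le_of_lt hl)

lemma align (s : Fin m → Fin k → A) (p : ℕ) {n : ℕ}
    (X Y : Fin n → Fin m × Fin (k+1))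
    (hX : Function.Bijective X) (hY : Function.Bijective Y)
    (hXm : ∀ i j : Fin n, i < j → pprefix s p (X i) = pprefix s p (X j) ∨
        List.Lex (· < ·) (pprefix s p (X i)) (pprefix s p (X j)))
    (hYm : ∀ i j : Fin n, i < j → pprefix s p (Y i) = pprefix s p (Y j) ∨
        List.Lex (· < ·) (pprefix s p (Y i)) (pprefix s p (Y j))) :
    ∀ j, pprefix s p (X j) = pprefix s p (Y j) := by
  have hperm : List.Perm ((List.finRange n).map X) ((List.finRange n).map Y) := by
    rw [List.perm_ext_iff_of_nodup ((List.nodup_finRange n).map hX.injective)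
      ((List.nodup_finRange n).map hY.injective)]
    intro a
    simp only [List.mem_map, List.mem_finRange, true_and]
    exact ⟨fun _ => hY.surjective a, fun _ => hX.surjective a⟩
  have key : List.ofFn (fun j => pprefix s p (X j)) =
      List.ofFn (fun j => pprefix s p (Y j)) := by
    refine (fun hp h1 h2 => List.Perm.eq_of_pairwise' (r := (· ≤ ·)) h1 h2 hp) ?_ ?_ ?_
    · have e1 : List.ofFn (fun j => pprefix s p (X j)) =
          ((List.finRange n).map X).map (pprefix s p) := by
        rw [List.ofFn_eq_map, List.map_map]; rfl
      have e2 : List.ofFn (fun j => pprefix s p (Y j)) =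
          ((List.finRange n).map Y).map (pprefix s p) := by
        rw [List.ofFn_eq_map, List.map_map]; rfl
      rw [e1, e2]
      exact hperm.map _
    · rw [List.pairwise_ofFn]
      intro i j hij
      exact list_le_of (hXm i j hij)
    · rw [List.pairwise_ofFn]
      intro i j hij
      exact list_le_of (hYm i j hij)
  intro j
  exact congrFun (List.ofFn_injective key) j

/-- Let `x` be the fully sorted suffix array and, for each `p`, let
`X p` be the array of suffixes sorted by `≺_p`.  For a position `i > 0`, the LCP value at
`i` — the length of the longest common prefix of the suffixes at positions `i-1` and `i`
of `x` — equals `p` iff `i` is the start of a `(p+1)`-segment of `X (p+1)` but not the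
start of a `p`-segment of `X p`; moreover such a `p` is unique. -/
theorem lcp_via_segments (s : Fin m → Fin k → A)
    (X : ℕ → Fin ((k + 1) * m) → Fin m × Fin (k + 1))
    (hbij : ∀ p, Function.Bijective (X p))
    (hsort : ∀ p i j, i < j → precP s p (X p i) (X p j))
    (x : Fin ((k + 1) * m) → Fin m × Fin (k + 1))
    (hxbij : Function.Bijective x)
    (hxsort : ∀ i j, i < j → fullOrd s (x i) (x j)) :
    ∀ i : Fin ((k + 1) * m), 0 < (i : ℕ) →
      (∀ p : ℕ,
        ((∀ t, t < p →
            symAt s (x ⟨(i : ℕ) - 1, Nat.lt_of_le_of_lt (Nat.sub_le _ _) i.isLt⟩) t =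
              symAt s (x i) t) ∧
          symAt s (x ⟨(i : ℕ) - 1, Nat.lt_of_le_of_lt (Nat.sub_le _ _) i.isLt⟩) p ≠
            symAt s (x i) p)
        ↔ (isStart s (p + 1) (X (p + 1)) i ∧ ¬ isStart s p (X p) i)) ∧
      (∃! p : ℕ, isStart s (p + 1) (X (p + 1)) i ∧ ¬ isStart s p (X p) i) := by

  have hxm : ∀ (p : ℕ) (i j : Fin ((k+1)*m)), i < j →
      pprefix s p (x i) = pprefix s p (x j) ∨
        List.Lex (· < ·) (pprefix s p (x i)) (pprefix s p (x j)) := by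
    intro p i j hij
    have hne : x i ≠ x j := fun e => (ne_of_lt hij) (hxbij.injective e)
    obtain ⟨d, hag, hlt⟩ := (fullOrd_iff s hne).1 (hxsort i j hij)
    by_cases hd : d < p
    · exact Or.inr (pprefix_lex s hd hag hlt)
    · exact Or.inl ((pprefix_eq_iff s p _ _).2 fun t ht => hag t (by omega))
  have hXm : ∀ (p : ℕ) (i j : Fin ((k+1)*m)), i < j →
      pprefix s p (X p i) = pprefix s p (X p j) ∨
        List.Lex (· < ·) (pprefix s p (X p i)) (pprefix s p (X p j)) := by
    intro p i j hij
    rcases hsort p i j hij with h | ⟨he, _⟩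
    · exact Or.inr h
    · exact Or.inl he
  have halign : ∀ (p : ℕ) (j : Fin ((k+1)*m)), pprefix s p (X p j) = pprefix s p (x j) :=
    fun p => align s p (X p) x (hbij p) hxbij (hXm p) (hxm p)
  intro i hi
  have hi'pf : (i : ℕ) - 1 < (k+1)*m := Nat.lt_of_le_of_lt (Nat.sub_le _ _) i.isLt
  set i' : Fin ((k+1)*m) := ⟨(i:ℕ) - 1, hi'pf⟩ with hi'def
  have hi'lt : i' < i := by
    rw [Fin.lt_def]
    simp only [hi'def]
    omega
  have hstart : ∀ p : ℕ, isStart s p (X p) i ↔ pprefix s p (x i') ≠ pprefix s p (x i) := by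
    intro p
    constructor
    · intro h heq
      apply h i' hi'lt
      rw [halign p i', halign p i]
      exact heq
    · intro hne j hji heq
      apply hne
      rw [halign p j, halign p i] at heq
      have h2 : pprefix s p (x i') ≤ pprefix s p (x i) :=
        list_le_of (hxm p i' i hi'lt)
      have h1 : pprefix s p (x j) ≤ pprefix s p (x i') := by
        have hle : j ≤ i' := by
          rw [Fin.le_def]
          have := Fin.lt_def.1 hji
          simp only [hi'def]
          omega
        rcases eq_or_lt_of_le hle with he | hlt
        · rw [he]
        · exact list_le_of (hxm p j i' hlt)
      exact le_antisymm h2 (heq ▸ h1)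
  have hab : x i' ≠ x i := by
    intro e
    have h2 := congrArg Fin.val (hxbij.injective e)
    simp only [hi'def] at h2
    omega
  have hiff : ∀ p : ℕ,
      ((∀ t, t < p → symAt s (x i') t = symAt s (x i) t) ∧
        symAt s (x i') p ≠ symAt s (x i) p)
      ↔ (isStart s (p + 1) (X (p + 1)) i ∧ ¬ isStart s p (X p) i) := by
    intro p
    rw [hstart (p+1), hstart p]
    constructor
    · rintro ⟨hag, hne⟩
      refine ⟨?_, ?_⟩
      · intro heq
        exact hne ((pprefix_eq_iff s (p+1) _ _).1 heq p (by omega))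
      · intro hppne
        exact hppne ((pprefix_eq_iff s p _ _).2 fun t ht => hag t ht)
    · rintro ⟨hne1, hne0⟩
      have heq0 : pprefix s p (x i') = pprefix s p (x i) := not_not.1 hne0
      have hag := (pprefix_eq_iff s p _ _).1 heq0
      refine ⟨hag, ?_⟩
      intro hp
      apply hne1
      apply (pprefix_eq_iff s (p+1) _ _).2
      intro t ht
      rcases Nat.lt_or_ge t p with h | h
      · exact hag t h
      · have het : t = p := by omega
        rw [het]
        exact hp
  have hD : ∃ t, symAt s (x i') t ≠ symAt s (x i) t :=
    ⟨_, symAt_min_ne s hab⟩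
  have hP : ∃! p, (∀ t, t < p → symAt s (x i') t = symAt s (x i) t) ∧
      symAt s (x i') p ≠ symAt s (x i) p := by
    refine ⟨Nat.find hD, ⟨fun t ht => not_not.1 (Nat.find_min hD ht), Nat.find_spec hD⟩, ?_⟩
    rintro q ⟨hag, hne⟩
    rcases lt_trichotomy q (Nat.find hD) with h | h | h
    · exact absurd hne (Nat.find_min hD h)
    · exact h
    · exact absurd (hag _ h) (Nat.find_spec hD)
  exact ⟨fun p => hiff p, (existsUnique_congr hiff).mp hP⟩
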